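/- arXiv:2103.16797 — 3 statements merged into one kernel-verified Lean document; each statement's English description precedes it below -/
import Mathlib

section
/- With τ_AB = X_AB^{1/2}((X_A^{-1/2} ω_A X_A^{-1/2}) ⊗ I_B) X_AB^{1/2} for a positive definite state ω_A, and V the isometric extension of the Petz recovery channel, one has V† (τ_AB^{-1} ⊗ Y_{ÂB̂}^T) V = ω_A^{-1} ⊗ Y_Â^T, where Y_Â = Tr_B̂ Y_{ÂB̂}. -/
open Matrix Kronecker ComplexOrder

noncomputable def msqrt {n : Type*} [Fintype n] [DecidableEq n] (A : Matrix n n ℂ) :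
    Matrix n n ℂ := cfc Real.sqrt A

noncomputable def mrpow {n : Type*} [Fintype n] [DecidableEq n] (A : Matrix n n ℂ) (s : ℝ) :
    Matrix n n ℂ := cfc (fun x : ℝ => x ^ s) A

noncomputable def mlog {n : Type*} [Fintype n] [DecidableEq n] (A : Matrix n n ℂ) :
    Matrix n n ℂ := cfc Real.log A

/-- Partial trace over the second tensor factor. -/
noncomputable def ptrB {a b : ℕ} (X : Matrix (Fin a × Fin b) (Fin a × Fin b) ℂ) :
    Matrix (Fin a) (Fin a) ℂ :=
  Matrix.of fun i k => ∑ j, X (i, j) (k, j)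


noncomputable def petzV {a b : ℕ} (S : Matrix (Fin a × Fin b) (Fin a × Fin b) ℂ)
    (Am : Matrix (Fin a) (Fin a) ℂ) :
    Matrix ((Fin a × Fin b) × (Fin a × Fin b)) (Fin a × Fin a) ℂ :=
  Matrix.of fun p q =>
    (S * (Am ⊗ₖ (1 : Matrix (Fin b) (Fin b) ℂ))) p.1 (q.1, p.2.2) *
      (if p.2.1 = q.2 then 1 else 0)

/-! ### Auxiliary lemmas -/

lemma posDef_conj {n : Type*} [Fintype n] [DecidableEq n] {A B : Matrix n n ℂ}
    (hA : A.PosDef) (hB : IsUnit B.det) : (Bᴴ * A * B).PosDef := by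
  refine Matrix.PosDef.of_dotProduct_mulVec_pos (Matrix.isHermitian_conjTranspose_mul_mul B hA.1) fun x hx => ?_
  have hBx : B *ᵥ x ≠ 0 := fun h => hx <| by
    have h2 : B⁻¹ *ᵥ (B *ᵥ x) = x := by
      rw [Matrix.mulVec_mulVec, Matrix.nonsing_inv_mul _ hB, Matrix.one_mulVec]
    rw [h, Matrix.mulVec_zero] at h2
    exact h2.symm
  simpa only [star_mulVec, Matrix.dotProduct_mulVec, Matrix.vecMul_vecMul,
    Matrix.conjTranspose_conjTranspose, Matrix.mul_assoc]
    using hA.dotProduct_mulVec_pos hBx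

lemma msqrt_posDef {n : Type*} [Fintype n] [DecidableEq n] {A : Matrix n n ℂ}
    (hA : A.PosDef) : (msqrt A).PosDef := by
  rw [msqrt, hA.1.cfc_eq, Matrix.IsHermitian.cfc]
  have hdiag : (Matrix.diagonal
      ((RCLike.ofReal : ℝ → ℂ) ∘ Real.sqrt ∘ hA.1.eigenvalues)).PosDef := by
    rw [Matrix.posDef_diagonal_iff]
    intro i
    simpa using Real.sqrt_pos.2 (hA.eigenvalues_pos i)
  have hu : IsUnit (star (hA.1.eigenvectorUnitary : Matrix n n ℂ)).det := by
    refine IsUnit.of_mul_eq_one (hA.1.eigenvectorUnitary : Matrix n n ℂ).det ?_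
    rw [← Matrix.det_mul]
    simp [Unitary.coe_star_mul_self hA.1.eigenvectorUnitary]
  have := posDef_conj hdiag hu
  simpa [Matrix.star_eq_conjTranspose, Matrix.conjTranspose_conjTranspose, Matrix.mul_assoc]
    using this

lemma sum_rot {α β γ M : Type*} [AddCommMonoid M] [Fintype α] [Fintype β] [Fintype γ]
    (f : α → β → γ → M) :
    ∑ x : α, ∑ y : β, ∑ z : γ, f x y z = ∑ z : γ, ∑ x : α, ∑ y : β, f x y z := by
  calc ∑ x : α, ∑ y : β, ∑ z : γ, f x y z
      = ∑ x : α, ∑ z : γ, ∑ y : β, f x y z :=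
        Finset.sum_congr rfl fun _ _ => Finset.sum_comm
    _ = ∑ z : γ, ∑ x : α, ∑ y : β, f x y z := Finset.sum_comm

lemma ptrB_posDef {a b : ℕ} (hb : 0 < b) {X : Matrix (Fin a × Fin b) (Fin a × Fin b) ℂ}
    (hX : X.PosDef) : (ptrB X).PosDef := by
  refine Matrix.PosDef.of_dotProduct_mulVec_pos ?_ ?_
  · ext i k
    simp only [conjTranspose_apply, ptrB, of_apply, star_sum]
    exact Finset.sum_congr rfl fun j _ => hX.1.apply (i, j) (k, j)
  · intro x hx
    classical
    set y : Fin b → (Fin a × Fin b → ℂ) := fun j p => if p.2 = j then x p.1 else 0 with hy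
    have hlhs : dotProduct (star x) (ptrB X *ᵥ x)
        = ∑ j : Fin b, ∑ i : Fin a, ∑ k : Fin a, star (x i) * (X (i, j) (k, j) * x k) := by
      simp only [dotProduct, mulVec, ptrB, of_apply, Pi.star_apply, Finset.sum_mul,
        Finset.mul_sum]
      rw [sum_rot]
    have hdot : ∀ j : Fin b, dotProduct (star (y j)) (X *ᵥ y j)
        = ∑ i : Fin a, ∑ k : Fin a, star (x i) * (X (i, j) (k, j) * x k) := by
      intro j
      simp only [dotProduct, mulVec, hy, Fintype.sum_prod_type, Pi.star_apply,
        apply_ite (star : ℂ → ℂ), star_zero, ite_mul, zero_mul, mul_ite, mul_zero,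
        Finset.sum_ite_eq', Finset.mem_univ, if_true, Finset.mul_sum]
      refine Finset.sum_congr rfl fun i _ => ?_
      rw [Finset.sum_comm]
      simp
    have hsum : dotProduct (star x) (ptrB X *ᵥ x)
        = ∑ j, dotProduct (star (y j)) (X *ᵥ y j) := by
      rw [hlhs]
      exact Finset.sum_congr rfl fun j _ => (hdot j).symm
    rw [hsum]
    obtain ⟨i0, hi0⟩ := Function.ne_iff.mp hx
    have j0 : Fin b := ⟨0, hb⟩
    refine Finset.sum_pos' (fun j _ => hX.posSemidef.dotProduct_mulVec_nonneg (y j)) ⟨j0, Finset.mem_univ _, ?_⟩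
    refine hX.dotProduct_mulVec_pos (x := y j0) fun h => hi0 ?_
    have := congrFun h (i0, j0)
    simpa [hy] using this

lemma kron_conjTranspose {l m n p : Type*} (A : Matrix l m ℂ) (B : Matrix n p ℂ) :
    (A ⊗ₖ B)ᴴ = Aᴴ ⊗ₖ Bᴴ := by
  ext ⟨i, j⟩ ⟨k, l'⟩
  simp [conjTranspose_apply, kroneckerMap_apply]

lemma fubini6 {α β : Type*} [Fintype α] [Fintype β] {M : Type*} [AddCommMonoid M]
    (f : α → β → β → α → β → β → M) :
    ∑ x : α, ∑ y : β, ∑ j : β, ∑ d : α, ∑ e : β, ∑ j' : β, f x y j d e j'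
      = ∑ j : β, ∑ j' : β, ∑ d : α, ∑ e : β, ∑ x : α, ∑ y : β, f x y j d e j' := by
  calc ∑ x : α, ∑ y : β, ∑ j : β, ∑ d : α, ∑ e : β, ∑ j' : β, f x y j d e j'
      = ∑ j : β, ∑ x : α, ∑ y : β, ∑ d : α, ∑ e : β, ∑ j' : β, f x y j d e j' :=
        sum_rot _
    _ = ∑ j : β, ∑ d : α, ∑ x : α, ∑ y : β, ∑ e : β, ∑ j' : β, f x y j d e j' :=
        Finset.sum_congr rfl fun j _ => sum_rot _
    _ = ∑ j : β, ∑ d : α, ∑ e : β, ∑ x : α, ∑ y : β, ∑ j' : β, f x y j d e j' :=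
        Finset.sum_congr rfl fun j _ => Finset.sum_congr rfl fun d _ => sum_rot _
    _ = ∑ j : β, ∑ d : α, ∑ e : β, ∑ j' : β, ∑ x : α, ∑ y : β, f x y j d e j' :=
        Finset.sum_congr rfl fun j _ => Finset.sum_congr rfl fun d _ =>
          Finset.sum_congr rfl fun e _ => sum_rot _
    _ = ∑ j : β, ∑ j' : β, ∑ d : α, ∑ e : β, ∑ x : α, ∑ y : β, f x y j d e j' :=
        Finset.sum_congr rfl fun j _ => sum_rot _

lemma petz_key {a b : ℕ} (M N Y : Matrix (Fin a × Fin b) (Fin a × Fin b) ℂ)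
    (Z : Matrix (Fin a) (Fin a) ℂ)
    (key : Mᴴ * N * M = Z ⊗ₖ (1 : Matrix (Fin b) (Fin b) ℂ)) :
    (Matrix.of fun (p : (Fin a × Fin b) × (Fin a × Fin b)) (q : Fin a × Fin a) =>
        M p.1 (q.1, p.2.2) * (if p.2.1 = q.2 then 1 else 0))ᴴ *
      ((N ⊗ₖ Yᵀ) *
      (Matrix.of fun (p : (Fin a × Fin b) × (Fin a × Fin b)) (q : Fin a × Fin a) =>
        M p.1 (q.1, p.2.2) * (if p.2.1 = q.2 then 1 else 0))) =
      Z ⊗ₖ (ptrB Y)ᵀ := by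
  have hkey : ∀ (i k : Fin a) (j j' : Fin b),
      (∑ x', (∑ x, star (M x (i, j)) * N x x') * M x' (k, j'))
        = Z i k * (if j = j' then 1 else 0) := by
    intro i k j j'
    have h : (Mᴴ * N * M) (i, j) (k, j')
        = (Z ⊗ₖ (1 : Matrix (Fin b) (Fin b) ℂ)) (i, j) (k, j') := by rw [key]
    simpa [mul_apply, conjTranspose_apply, kroneckerMap_apply, one_apply] using h
  ext ⟨i, i'⟩ ⟨k, k'⟩
  simp only [mul_apply, conjTranspose_apply, of_apply, kroneckerMap_apply, transpose_apply,
    Fintype.sum_prod_type, apply_ite (star : ℂ → ℂ), star_one, star_zero, star_mul',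
    ite_mul, zero_mul, mul_ite, mul_zero, mul_one, one_mul,
    Finset.sum_ite_irrel, Finset.sum_const_zero,
    Finset.sum_ite_eq', Finset.mem_univ, if_true, ptrB]
  simp only [Finset.mul_sum]
  rw [fubini6 (f := fun x y j d e j' =>
    star (M (x, y) (i, j)) * (N (x, y) (d, e) * Y (k', j') (i', j) * M (d, e) (k, j')))]
  have hrhs : ∑ j : Fin b, Z i k * Y (k', j) (i', j)
      = ∑ j, ∑ j', (Z i k * if j = j' then 1 else 0) * Y (k', j') (i', j) := by
    simp [mul_ite, mul_one, mul_zero, ite_mul, zero_mul, Finset.sum_ite_eq,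
      Finset.mem_univ, if_true, Finset.mul_sum]
  rw [hrhs]
  refine Finset.sum_congr rfl fun j _ => Finset.sum_congr rfl fun j' _ => ?_
  rw [← hkey i k j j']
  simp only [Fintype.sum_prod_type, Finset.sum_mul]
  exact Finset.sum_congr rfl fun d _ => Finset.sum_congr rfl fun e _ =>
    Finset.sum_congr rfl fun x _ => Finset.sum_congr rfl fun y _ => by ring

/-- With `τ_AB` the output of the Petz recovery channel on `ω_A`, conjugating
`τ_AB⁻¹ ⊗ Y_{ÂB̂}ᵀ` by the isometric extension `V` gives `ω_A⁻¹ ⊗ Y_Âᵀ`. -/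
theorem petzV_conjugation (a b : ℕ)
    (XAB YAB : Matrix (Fin a × Fin b) (Fin a × Fin b) ℂ)
    (hXAB : XAB.PosDef) (hYAB : YAB.PosDef)
    (ω : Matrix (Fin a) (Fin a) ℂ) (hω : ω.PosDef) (hω1 : ω.trace = 1) :
    (petzV (msqrt XAB) ((msqrt (ptrB XAB))⁻¹))ᴴ *
      ((msqrt XAB *
          ((((msqrt (ptrB XAB))⁻¹ * ω * (msqrt (ptrB XAB))⁻¹) ⊗ₖ
            (1 : Matrix (Fin b) (Fin b) ℂ))) * msqrt XAB)⁻¹ ⊗ₖ YABᵀ) *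
      petzV (msqrt XAB) ((msqrt (ptrB XAB))⁻¹) =
      ω⁻¹ ⊗ₖ (ptrB YAB)ᵀ := by
  classical
  rcases Nat.eq_zero_or_pos b with hb | hb
  · subst hb
    ext ⟨i, i'⟩ ⟨k, k'⟩
    simp [mul_apply, ptrB, kroneckerMap_apply, Fintype.sum_prod_type]
  set S := msqrt XAB with hSdef
  set T := msqrt (ptrB XAB) with hTdef
  set Am := T⁻¹ with hAmdef
  have hS : S.PosDef := msqrt_posDef hXAB
  have hT : T.PosDef := msqrt_posDef (ptrB_posDef hb hXAB)
  have hAm : Am.PosDef := hT.inv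
  have hSdet : IsUnit S.det := isUnit_iff_ne_zero.2 hS.det_pos.ne'
  have hTdet : IsUnit T.det := isUnit_iff_ne_zero.2 hT.det_pos.ne'
  set W := Am * ω * Am with hWdef
  set M := S * (Am ⊗ₖ (1 : Matrix (Fin b) (Fin b) ℂ)) with hMdef
  have hVeq : petzV S Am = Matrix.of fun (p : (Fin a × Fin b) × (Fin a × Fin b))
      (q : Fin a × Fin a) => M p.1 (q.1, p.2.2) * (if p.2.1 = q.2 then 1 else 0) := rfl
  have hWinv : W⁻¹ = T * ω⁻¹ * T := by
    rw [hWdef, Matrix.mul_inv_rev, Matrix.mul_inv_rev, hAmdef,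
      Matrix.nonsing_inv_nonsing_inv _ hTdet]
    rw [Matrix.mul_assoc]
  have hMH : Mᴴ = (Am ⊗ₖ (1 : Matrix (Fin b) (Fin b) ℂ)) * S := by
    rw [hMdef, Matrix.conjTranspose_mul, kron_conjTranspose, hAm.1.eq,
      Matrix.conjTranspose_one, hS.1.eq]
  have hτinv : (S * (W ⊗ₖ (1 : Matrix (Fin b) (Fin b) ℂ)) * S)⁻¹
      = S⁻¹ * ((W⁻¹ ⊗ₖ (1 : Matrix (Fin b) (Fin b) ℂ)) * S⁻¹) := by
    rw [Matrix.mul_inv_rev, Matrix.mul_inv_rev, Matrix.inv_kronecker, inv_one]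
  have key : Mᴴ * (S * (W ⊗ₖ (1 : Matrix (Fin b) (Fin b) ℂ)) * S)⁻¹ * M
      = ω⁻¹ ⊗ₖ (1 : Matrix (Fin b) (Fin b) ℂ) := by
    rw [hτinv, hMH, hMdef]
    calc (Am ⊗ₖ (1 : Matrix (Fin b) (Fin b) ℂ)) * S *
          (S⁻¹ * ((W⁻¹ ⊗ₖ (1 : Matrix (Fin b) (Fin b) ℂ)) * S⁻¹)) *
          (S * (Am ⊗ₖ (1 : Matrix (Fin b) (Fin b) ℂ)))
        = (Am ⊗ₖ (1 : Matrix (Fin b) (Fin b) ℂ)) * (S * S⁻¹) *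
            (W⁻¹ ⊗ₖ (1 : Matrix (Fin b) (Fin b) ℂ)) * (S⁻¹ * S) *
            (Am ⊗ₖ (1 : Matrix (Fin b) (Fin b) ℂ)) := by
          simp only [Matrix.mul_assoc]
      _ = (Am ⊗ₖ (1 : Matrix (Fin b) (Fin b) ℂ)) * (W⁻¹ ⊗ₖ (1 : Matrix (Fin b) (Fin b) ℂ)) *
            (Am ⊗ₖ (1 : Matrix (Fin b) (Fin b) ℂ)) := by
          rw [Matrix.mul_nonsing_inv _ hSdet, Matrix.nonsing_inv_mul _ hSdet, Matrix.mul_one,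
            Matrix.mul_one]
      _ = (Am * W⁻¹ * Am) ⊗ₖ ((1 : Matrix (Fin b) (Fin b) ℂ) * 1 * 1) := by
          rw [← Matrix.mul_kronecker_mul, ← Matrix.mul_kronecker_mul]
      _ = ω⁻¹ ⊗ₖ (1 : Matrix (Fin b) (Fin b) ℂ) := by
          rw [hWinv, hAmdef]
          have : T⁻¹ * (T * ω⁻¹ * T) * T⁻¹ = ω⁻¹ := by
            rw [Matrix.mul_assoc (T⁻¹) _ _, Matrix.mul_assoc (T * ω⁻¹) _ _,
              Matrix.mul_nonsing_inv _ hTdet, Matrix.mul_one, ← Matrix.mul_assoc,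
              Matrix.nonsing_inv_mul _ hTdet, Matrix.one_mul]
          rw [this, Matrix.mul_one, Matrix.mul_one]
  have := petz_key M ((S * (W ⊗ₖ (1 : Matrix (Fin b) (Fin b) ℂ)) * S)⁻¹) YAB ω⁻¹ key
  rw [hVeq, ← Matrix.mul_assoc] at *
  simpa [Matrix.mul_assoc] using this
end

section
/- If f : (0,∞) → ℝ is operator convex, V is an isometry between finite-dimensional inner product spaces, A is a positive definite operator on the codomain, and ψ is any vector in the domain, then ⟨ψ| V† f(A) V |ψ⟩ ≥ ⟨ψ| f(V† A V) |ψ⟩ (a consequence of the operator Jensen inequality). -/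
open Matrix ComplexOrder

/-- The Loewner order on complex matrices. -/
def loewnerLE {n : Type*} [Fintype n] (A B : Matrix n n ℂ) : Prop := (B - A).PosSemidef

section Aux

open Polynomial

private lemma ojvf_quad_conj {m' n' : Type*} [Fintype m'] [Fintype n']
    (M : Matrix m' m' ℂ) (W : Matrix m' n' ℂ) (x : n' → ℂ) :
    star x ⬝ᵥ (Wᴴ * M * W) *ᵥ x = star (W *ᵥ x) ⬝ᵥ M *ᵥ (W *ᵥ x) := by
  rw [← Matrix.mulVec_mulVec, ← Matrix.mulVec_mulVec, Matrix.dotProduct_mulVec,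
    ← Matrix.star_mulVec]

private lemma ojvf_conj_pow {k : Type*} [Fintype k] [DecidableEq k]
    (U B : Matrix k k ℂ) (h1 : Uᴴ * U = 1) (h2 : U * Uᴴ = 1) (j : ℕ) :
    (Uᴴ * B * U) ^ j = Uᴴ * B ^ j * U := by
  induction j with
  | zero => simp [h1]
  | succ i ih =>
    rw [pow_succ, pow_succ, ih]
    have h3 : Uᴴ * B ^ i * U * (Uᴴ * B * U) = Uᴴ * B ^ i * (U * Uᴴ) * (B * U) := by
      simp only [Matrix.mul_assoc]
    rw [h3, h2, Matrix.mul_one]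
    simp only [Matrix.mul_assoc]

private lemma ojvf_aeval_conj {k : Type*} [Fintype k] [DecidableEq k]
    (p : ℝ[X]) (U B : Matrix k k ℂ) (h1 : Uᴴ * U = 1) (h2 : U * Uᴴ = 1) :
    aeval (Uᴴ * B * U) p = Uᴴ * aeval B p * U := by
  induction p using Polynomial.induction_on with
  | C c =>
    simp [Algebra.algebraMap_eq_smul_one, Matrix.mul_smul, Matrix.smul_mul, h1]
  | add p q hp hq => simp [hp, hq, Matrix.mul_add, Matrix.add_mul]
  | monomial j c ih =>
    simp only [_root_.map_mul, map_pow, aeval_C, aeval_X, ojvf_conj_pow U B h1 h2,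
      Algebra.algebraMap_eq_smul_one, Matrix.smul_mul, Matrix.mul_smul, Matrix.one_mul]

private lemma ojvf_fromBlocks_pow {a b : Type*} [Fintype a] [Fintype b] [DecidableEq a]
    [DecidableEq b] (X : Matrix a a ℂ) (Y : Matrix b b ℂ) (j : ℕ) :
    (fromBlocks X 0 0 Y) ^ j = fromBlocks (X ^ j) 0 0 (Y ^ j) := by
  induction j with
  | zero => simp [fromBlocks_one]
  | succ i ih =>
    rw [pow_succ, pow_succ, ih, fromBlocks_multiply]
    simp [← pow_succ, pow_succ]

private lemma ojvf_aeval_fromBlocks {a b : Type*} [Fintype a] [Fintype b] [DecidableEq a]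
    [DecidableEq b] (p : ℝ[X]) (X : Matrix a a ℂ) (Y : Matrix b b ℂ) :
    aeval (fromBlocks X 0 0 Y) p = fromBlocks (aeval X p) 0 0 (aeval Y p) := by
  induction p using Polynomial.induction_on with
  | C c =>
    simp [Algebra.algebraMap_eq_smul_one, ← fromBlocks_one, fromBlocks_smul]
  | add p q hp hq => simp [hp, hq, fromBlocks_add]
  | monomial j c ih =>
    simp only [_root_.map_mul, map_pow, aeval_C, aeval_X, ojvf_fromBlocks_pow,
      Algebra.algebraMap_eq_smul_one, Matrix.smul_mul, Matrix.one_mul, fromBlocks_smul,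
      smul_zero]

private lemma ojvf_cfc_eq_aeval {k : Type*} [Fintype k] [DecidableEq k]
    (S : Finset ℝ) (f : ℝ → ℝ) (M : Matrix k k ℂ)
    (hM : IsSelfAdjoint M) (hS : spectrum ℝ M ⊆ ↑S) :
    cfc f M = aeval M (Lagrange.interpolate S id f) := by
  rw [← cfc_polynomial (Lagrange.interpolate S id f) M hM]
  refine cfc_congr fun x hx => ?_
  exact (Lagrange.eval_interpolate_at_node f (Set.injOn_id _) (hS hx)).symm

private lemma ojvf_posdef_conj {m' n' : Type*} [Fintype m'] [Fintype n'] [DecidableEq n']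
    {B : Matrix m' m' ℂ} (hB : B.PosDef) (W : Matrix m' n' ℂ) (hW : Wᴴ * W = 1) :
    (Wᴴ * B * W).PosDef := by
  rw [posDef_iff_dotProduct_mulVec]
  constructor
  · show (Wᴴ * B * W)ᴴ = _
    rw [conjTranspose_mul, conjTranspose_mul, conjTranspose_conjTranspose, hB.1.eq]
    simp only [Matrix.mul_assoc]
  · intro x hx
    rw [ojvf_quad_conj]
    refine hB.dotProduct_mulVec_pos fun h => hx ?_
    have h2 : Wᴴ *ᵥ (W *ᵥ x) = x := by rw [Matrix.mulVec_mulVec, hW, Matrix.one_mulVec]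
    rw [← h2, h, Matrix.mulVec_zero]

private lemma ojvf_star_sum_elim {a b : Type*} (u : a → ℂ) (v : b → ℂ) :
    star (Sum.elim u v) = Sum.elim (star u) (star v) := by
  funext i; cases i <;> rfl

private lemma ojvf_posdef_fromBlocks {a b : Type*} [Fintype a] [Fintype b] [DecidableEq a]
    [DecidableEq b] {X : Matrix a a ℂ} {Y : Matrix b b ℂ} (hX : X.PosDef) (hY : Y.PosDef) :
    (fromBlocks X 0 0 Y).PosDef := by
  rw [posDef_iff_dotProduct_mulVec]
  constructor
  · show _ᴴ = _
    rw [fromBlocks_conjTranspose, conjTranspose_zero, conjTranspose_zero, hX.1.eq, hY.1.eq]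
  · intro x hx
    have hxeq : x = Sum.elim (x ∘ Sum.inl) (x ∘ Sum.inr) := by funext i; cases i <;> rfl
    rw [hxeq, fromBlocks_mulVec, ojvf_star_sum_elim]
    simp only [Sum.elim_comp_inl, Sum.elim_comp_inr, Matrix.zero_mulVec, add_zero, zero_add,
      sumElim_dotProduct_sumElim]
    by_cases hu : x ∘ Sum.inl = 0
    · have hv : x ∘ Sum.inr ≠ 0 := by
        intro h
        exact hx (by rw [hxeq, hu, h]; funext i; cases i <;> rfl)
      exact add_pos_of_nonneg_of_pos (hX.posSemidef.dotProduct_mulVec_nonneg _) (hY.dotProduct_mulVec_pos hv)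
    · exact add_pos_of_pos_of_nonneg (hX.dotProduct_mulVec_pos hu) (hY.posSemidef.dotProduct_mulVec_nonneg _)

private lemma ojvf_posdef_reindex {a b : Type*} [Fintype a] [DecidableEq a] [Fintype b]
    [DecidableEq b] (e : a ≃ b) {M : Matrix a a ℂ} (hM : M.PosDef) :
    (Matrix.reindex e e M).PosDef := by
  rw [posDef_iff_dotProduct_mulVec]
  constructor
  · show _ᴴ = _
    simp [reindex_apply, hM.1.eq]
  · intro x hx
    rw [reindex_apply]
    have h1 : M.submatrix ⇑e.symm ⇑e.symm *ᵥ x = (M *ᵥ (x ∘ e)) ∘ e.symm := by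
      rw [Matrix.submatrix_mulVec_equiv]
      simp
    rw [h1]
    have h2 : star x ⬝ᵥ ((M *ᵥ (x ∘ e)) ∘ e.symm) = star (x ∘ e) ⬝ᵥ (M *ᵥ (x ∘ e)) := by
      simp only [dotProduct]
      exact Fintype.sum_equiv e.symm _ _ (fun i => by simp)
    rw [h2]
    refine hM.dotProduct_mulVec_pos fun h => hx ?_
    funext i
    have h3 := congrFun h (e.symm i)
    simpa using h3

end Aux

/-- Consequence of the operator Jensen inequality: for `f` operator convex on `(0,∞)`,
an isometry `V`, a positive definite `A`, and any vector `ψ`,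
`⟨ψ| f(V†AV) |ψ⟩ ≤ ⟨ψ| V† f(A) V |ψ⟩`. -/
theorem operator_jensen_vector_form (f : ℝ → ℝ) (hf_cont : ContinuousOn f (Set.Ioi 0))
    (hf_opconvex : ∀ (k : ℕ) (A B : Matrix (Fin k) (Fin k) ℂ), A.PosDef → B.PosDef →
      ∀ t : ℝ, 0 ≤ t → t ≤ 1 →
        loewnerLE (cfc f (t • A + (1 - t) • B)) (t • cfc f A + (1 - t) • cfc f B))
    (m n : ℕ) (V : Matrix (Fin m) (Fin n) ℂ) (hV : Vᴴ * V = 1)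
    (A : Matrix (Fin m) (Fin m) ℂ) (hA : A.PosDef) (ψ : Fin n → ℂ) :
    (star ψ ⬝ᵥ (cfc f (Vᴴ * A * V)).mulVec ψ).re ≤
      (star ψ ⬝ᵥ (Vᴴ * cfc f A * V).mulVec ψ).re := by
  classical
  have hC : (Vᴴ * A * V).PosDef := ojvf_posdef_conj hA V hV
  set C : Matrix (Fin n) (Fin n) ℂ := Vᴴ * A * V with hCdef
  -- the projection and its complement
  set P : Matrix (Fin m) (Fin m) ℂ := V * Vᴴ with hPdef
  set Q : Matrix (Fin m) (Fin m) ℂ := 1 - P with hQdef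
  have hPP : P * P = P := by
    rw [hPdef, Matrix.mul_assoc V Vᴴ (V * Vᴴ), ← Matrix.mul_assoc Vᴴ V Vᴴ, hV, Matrix.one_mul]
  have hQV : Q * V = 0 := by
    rw [hQdef]
    simp only [Matrix.sub_mul, Matrix.one_mul, hPdef, Matrix.mul_assoc, hV, Matrix.mul_one]
    exact sub_self V
  have hVQ : Vᴴ * Q = 0 := by
    rw [hQdef]
    simp only [Matrix.mul_sub, Matrix.mul_one, hPdef, ← Matrix.mul_assoc, hV, Matrix.one_mul]
    exact sub_self Vᴴ
  have hQQ : Q * Q = Q := by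
    rw [hQdef]
    simp only [Matrix.mul_sub, Matrix.sub_mul, Matrix.mul_one, Matrix.one_mul, hPP]
    abel
  have hTL : Q * Q + V * Vᴴ = 1 := by rw [hQQ, ← hPdef, hQdef]; abel
  have hQH : Qᴴ = Q := by
    rw [hQdef, conjTranspose_sub, conjTranspose_one, hPdef, conjTranspose_mul,
      conjTranspose_conjTranspose]
  -- the two unitaries
  set U₁ : Matrix (Fin m ⊕ Fin n) (Fin m ⊕ Fin n) ℂ := fromBlocks Q V Vᴴ 0 with hU₁def
  set U₂ : Matrix (Fin m ⊕ Fin n) (Fin m ⊕ Fin n) ℂ := fromBlocks (-Q) V (-Vᴴ) 0 with hU₂def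
  have hU1H : U₁ᴴ = U₁ := by
    rw [hU₁def, fromBlocks_conjTranspose, hQH, conjTranspose_conjTranspose, conjTranspose_zero]
  have hU2H : U₂ᴴ = fromBlocks (-Q) (-V) Vᴴ 0 := by
    rw [hU₂def, fromBlocks_conjTranspose, conjTranspose_neg, conjTranspose_neg, hQH,
      conjTranspose_conjTranspose, conjTranspose_zero]
  have hU1 : U₁ᴴ * U₁ = 1 := by
    rw [hU1H, hU₁def, fromBlocks_multiply, hTL]
    simp [hQV, hVQ, hV, fromBlocks_one]
  have hU1' : U₁ * U₁ᴴ = 1 := by rw [hU1H] at hU1 ⊢; exact hU1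
  have hU2 : U₂ᴴ * U₂ = 1 := by
    rw [hU2H, hU₂def, fromBlocks_multiply]
    simp only [Matrix.neg_mul, Matrix.mul_neg, neg_neg, Matrix.mul_zero, Matrix.zero_mul,
      add_zero, zero_add, neg_zero]
    rw [hTL]
    simp [hQV, hVQ, hV, fromBlocks_one]
  have hU2' : U₂ * U₂ᴴ = 1 := by
    rw [hU2H, hU₂def, fromBlocks_multiply]
    simp only [Matrix.neg_mul, Matrix.mul_neg, neg_neg, Matrix.mul_zero, Matrix.zero_mul,
      add_zero, zero_add, neg_zero]
    rw [hTL]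
    simp [hQV, hVQ, hV, fromBlocks_one]
  -- the block diagonal matrix B and its conjugates
  set B : Matrix (Fin m ⊕ Fin n) (Fin m ⊕ Fin n) ℂ := fromBlocks A 0 0 C with hBdef
  have hB : B.PosDef := ojvf_posdef_fromBlocks hA hC
  set M₁ : Matrix (Fin m ⊕ Fin n) (Fin m ⊕ Fin n) ℂ := U₁ᴴ * B * U₁ with hM₁def
  set M₂ : Matrix (Fin m ⊕ Fin n) (Fin m ⊕ Fin n) ℂ := U₂ᴴ * B * U₂ with hM₂def
  have hM₁ : M₁.PosDef := ojvf_posdef_conj hB U₁ hU1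
  have hM₂ : M₂.PosDef := ojvf_posdef_conj hB U₂ hU2
  set D' : Matrix (Fin m) (Fin m) ℂ := Q * (A * Q) + V * (C * Vᴴ) with hD'def
  set Avg : Matrix (Fin m ⊕ Fin n) (Fin m ⊕ Fin n) ℂ := fromBlocks D' 0 0 C with hAvgdef
  have key : (1/2 : ℝ) • M₁ + (1 - 1/2 : ℝ) • M₂ = Avg := by
    rw [hM₁def, hM₂def, hU1H, hU2H, hU₁def, hU₂def, hBdef, hAvgdef, hD'def]
    rw [fromBlocks_multiply, fromBlocks_multiply, fromBlocks_multiply, fromBlocks_multiply]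
    simp only [Matrix.neg_mul, Matrix.mul_neg, neg_neg, Matrix.mul_zero, Matrix.zero_mul,
      add_zero, zero_add, neg_zero, neg_add_rev]
    rw [fromBlocks_smul, fromBlocks_smul, fromBlocks_add]
    rw [hCdef]
    simp only [Matrix.mul_assoc]
    rw [fromBlocks_inj]
    refine ⟨?_, ?_, ?_, ?_⟩ <;> module
  -- the finite set containing all relevant spectra
  have hfin : (spectrum ℝ A ∪ spectrum ℝ C ∪ spectrum ℝ M₁ ∪ spectrum ℝ M₂
      ∪ spectrum ℝ Avg).Finite :=
    ((((Matrix.finite_real_spectrum.union Matrix.finite_real_spectrum).union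
      Matrix.finite_real_spectrum).union Matrix.finite_real_spectrum).union
      Matrix.finite_real_spectrum)
  set S : Finset ℝ := hfin.toFinset with hSdef
  set p : Polynomial ℝ := Lagrange.interpolate S id f with hpdef
  have hSA : spectrum ℝ A ⊆ ↑S := by
    rw [hSdef, Set.Finite.coe_toFinset]; intro x hx; simp [hx]
  have hSC : spectrum ℝ C ⊆ ↑S := by
    rw [hSdef, Set.Finite.coe_toFinset]; intro x hx; simp [hx]
  have hSM₁ : spectrum ℝ M₁ ⊆ ↑S := by
    rw [hSdef, Set.Finite.coe_toFinset]; intro x hx; simp [hx]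
  have hSM₂ : spectrum ℝ M₂ ⊆ ↑S := by
    rw [hSdef, Set.Finite.coe_toFinset]; intro x hx; simp [hx]
  have hSAvg : spectrum ℝ Avg ⊆ ↑S := by
    rw [hSdef, Set.Finite.coe_toFinset]; intro x hx; simp [hx]
  -- reindexing to Fin (m + n)
  set e : Fin m ⊕ Fin n ≃ Fin (m + n) := finSumFinEquiv with hedef
  have hrM₁ : (reindex e e M₁).PosDef := ojvf_posdef_reindex e hM₁
  have hrM₂ : (reindex e e M₂).PosDef := ojvf_posdef_reindex e hM₂
  have hreSpec : ∀ N : Matrix (Fin m ⊕ Fin n) (Fin m ⊕ Fin n) ℂ,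
      spectrum ℝ (reindex e e N) = spectrum ℝ N := by
    intro N
    rw [← reindexAlgEquiv_apply ℝ ℂ e]
    exact AlgEquiv.spectrum_eq (reindexAlgEquiv ℝ ℂ e) N
  have haeval_reindex : ∀ N : Matrix (Fin m ⊕ Fin n) (Fin m ⊕ Fin n) ℂ,
      Polynomial.aeval (reindex e e N) p = reindex e e (Polynomial.aeval N p) := by
    intro N
    have h := Polynomial.aeval_algHom_apply ((reindexAlgEquiv ℝ ℂ e).toAlgHom) N p
    simpa [reindexAlgEquiv_apply] using h
  -- cfc computations via the interpolating polynomial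
  have hcfcA : cfc f A = Polynomial.aeval A p := ojvf_cfc_eq_aeval S f A hA.1.isSelfAdjoint hSA
  have hcfcC : cfc f C = Polynomial.aeval C p := ojvf_cfc_eq_aeval S f C hC.1.isSelfAdjoint hSC
  set G : Matrix (Fin m ⊕ Fin n) (Fin m ⊕ Fin n) ℂ := fromBlocks (cfc f A) 0 0 (cfc f C)
    with hGdef
  have hGB : Polynomial.aeval B p = G := by
    rw [hBdef, ojvf_aeval_fromBlocks, hGdef, hcfcA, hcfcC]
  have h₁ : cfc f (reindex e e M₁) = reindex e e (U₁ᴴ * G * U₁) := by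
    rw [ojvf_cfc_eq_aeval S f _ hrM₁.1.isSelfAdjoint (by rw [hreSpec]; exact hSM₁),
      haeval_reindex, hM₁def, ojvf_aeval_conj p U₁ B hU1 hU1', hGB]
  have h₂ : cfc f (reindex e e M₂) = reindex e e (U₂ᴴ * G * U₂) := by
    rw [ojvf_cfc_eq_aeval S f _ hrM₂.1.isSelfAdjoint (by rw [hreSpec]; exact hSM₂),
      haeval_reindex, hM₂def, ojvf_aeval_conj p U₂ B hU2 hU2', hGB]
  have hsum : (1/2 : ℝ) • reindex e e M₁ + (1 - 1/2 : ℝ) • reindex e e M₂ = reindex e e Avg := by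
    rw [← key]
    simp [reindex_apply, Matrix.submatrix_add, Matrix.submatrix_smul]
  have hAvgSA : IsSelfAdjoint (reindex e e Avg) := by
    rw [← hsum]
    exact IsSelfAdjoint.add (IsSelfAdjoint.smul (star_trivial _) hrM₁.1.isSelfAdjoint)
      (IsSelfAdjoint.smul (star_trivial _) hrM₂.1.isSelfAdjoint)
  have h₃ : cfc f (reindex e e Avg) =
      reindex e e (fromBlocks (Polynomial.aeval D' p) 0 0 (cfc f C)) := by
    rw [ojvf_cfc_eq_aeval S f _ hAvgSA (by rw [hreSpec]; exact hSAvg),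
      haeval_reindex, hAvgdef, ojvf_aeval_fromBlocks, hcfcC]
  -- apply the operator convexity hypothesis
  have hyp := hf_opconvex (m + n) (reindex e e M₁) (reindex e e M₂) hrM₁ hrM₂ (1/2)
    (by norm_num) (by norm_num)
  unfold loewnerLE at hyp
  rw [hsum, h₁, h₂, h₃] at hyp
  set W₀ : Matrix (Fin m ⊕ Fin n) (Fin m ⊕ Fin n) ℂ :=
    (1/2 : ℝ) • (U₁ᴴ * G * U₁) + (1 - 1/2 : ℝ) • (U₂ᴴ * G * U₂)
      - fromBlocks (Polynomial.aeval D' p) 0 0 (cfc f C) with hW₀def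
  have hWre : (1/2 : ℝ) • reindex e e (U₁ᴴ * G * U₁) + (1 - 1/2 : ℝ) • reindex e e (U₂ᴴ * G * U₂)
      - reindex e e (fromBlocks (Polynomial.aeval D' p) 0 0 (cfc f C)) = reindex e e W₀ := by
    rw [hW₀def]
    simp [reindex_apply, Matrix.submatrix_add, Matrix.submatrix_smul, Matrix.submatrix_sub]
  rw [hWre] at hyp
  have hW₀ : W₀.PosSemidef := by
    rw [reindex_apply] at hyp
    exact (posSemidef_submatrix_equiv e.symm).mp hyp
  have hq := hW₀.dotProduct_mulVec_nonneg (Sum.elim (0 : Fin m → ℂ) ψ)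
  -- compute the quadratic forms
  have hU₁φ : U₁ *ᵥ Sum.elim (0 : Fin m → ℂ) ψ = Sum.elim (V *ᵥ ψ) 0 := by
    rw [hU₁def, fromBlocks_mulVec]
    simp
  have hU₂φ : U₂ *ᵥ Sum.elim (0 : Fin m → ℂ) ψ = Sum.elim (V *ᵥ ψ) 0 := by
    rw [hU₂def, fromBlocks_mulVec]
    simp
  have hGφ : star (Sum.elim (V *ᵥ ψ) (0 : Fin n → ℂ)) ⬝ᵥ G *ᵥ Sum.elim (V *ᵥ ψ) 0
      = star ψ ⬝ᵥ (Vᴴ * cfc f A * V) *ᵥ ψ := by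
    rw [hGdef, fromBlocks_mulVec, ojvf_star_sum_elim, ojvf_quad_conj (cfc f A) V ψ]
    simp [sumElim_dotProduct_sumElim]
  have e₁ : star (Sum.elim (0 : Fin m → ℂ) ψ) ⬝ᵥ (U₁ᴴ * G * U₁) *ᵥ Sum.elim (0 : Fin m → ℂ) ψ
      = star ψ ⬝ᵥ (Vᴴ * cfc f A * V) *ᵥ ψ := by
    rw [ojvf_quad_conj G U₁ _, hU₁φ, hGφ]
  have e₂ : star (Sum.elim (0 : Fin m → ℂ) ψ) ⬝ᵥ (U₂ᴴ * G * U₂) *ᵥ Sum.elim (0 : Fin m → ℂ) ψ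
      = star ψ ⬝ᵥ (Vᴴ * cfc f A * V) *ᵥ ψ := by
    rw [ojvf_quad_conj G U₂ _, hU₂φ, hGφ]
  have e₃ : star (Sum.elim (0 : Fin m → ℂ) ψ) ⬝ᵥ
      (fromBlocks (Polynomial.aeval D' p) 0 0 (cfc f C)) *ᵥ Sum.elim (0 : Fin m → ℂ) ψ
      = star ψ ⬝ᵥ (cfc f C) *ᵥ ψ := by
    rw [fromBlocks_mulVec, ojvf_star_sum_elim]
    simp [sumElim_dotProduct_sumElim]
  rw [hW₀def] at hq
  simp only [Matrix.sub_mulVec, Matrix.add_mulVec, Matrix.smul_mulVec, dotProduct_sub,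
    dotProduct_add, dotProduct_smul] at hq
  rw [e₁, e₂, e₃] at hq
  have hzz : (1/2 : ℝ) • (star ψ ⬝ᵥ (Vᴴ * cfc f A * V) *ᵥ ψ)
      + (1 - 1/2 : ℝ) • (star ψ ⬝ᵥ (Vᴴ * cfc f A * V) *ᵥ ψ)
      = star ψ ⬝ᵥ (Vᴴ * cfc f A * V) *ᵥ ψ := by
    rw [← add_smul]
    norm_num
  rw [hzz, sub_nonneg] at hq
  exact (Complex.le_def.mp hq).1
end

section
/- (Hölder duality, reverse form) For α ∈ [1/2, 1) and positive definite matrix Z on ℂ^d, the infimum over positive definite density matrices τ of Tr{Z τ^{(α-1)/α}} equals ‖Z‖_α = (Tr{Z^α})^{1/α}, with the infimum attained at τ = Z^α / Tr{Z^α}. -/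
open Matrix Kronecker ComplexOrder

section helpers

lemma diag_conj_entry {d : ℕ} (P : Matrix (Fin d) (Fin d) ℂ) (v : Fin d → ℝ) (i : Fin d) :
    (P * Matrix.diagonal (fun k => (v k : ℂ)) * Pᴴ) i i
      = ((∑ k, v k * Complex.normSq (P i k) : ℝ) : ℂ) := by
  push_cast
  rw [Matrix.mul_apply]
  refine Finset.sum_congr rfl fun k _ => ?_
  rw [Matrix.mul_diagonal, Matrix.conjTranspose_apply]
  calc P i k * (v k : ℂ) * star (P i k)
      = (v k : ℂ) * (P i k * star (P i k)) := by ring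
    _ = (v k : ℂ) * ((Complex.normSq (P i k) : ℝ) : ℂ) := by
        rw [Complex.star_def, Complex.mul_conj]

lemma conj_cfc_entry {d : ℕ} {A : Matrix (Fin d) (Fin d) ℂ} (hA : A.IsHermitian) (f : ℝ → ℝ)
    (N : Matrix (Fin d) (Fin d) ℂ) (i : Fin d) :
    (N * cfc f A * Nᴴ) i i = ((∑ k, f (hA.eigenvalues k) *
        Complex.normSq ((N * (hA.eigenvectorUnitary : Matrix (Fin d) (Fin d) ℂ)) i k) : ℝ) : ℂ) := by
  rw [hA.cfc_eq f, Matrix.IsHermitian.cfc, Unitary.conjStarAlgAut_apply]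
  have h1 : N * ((hA.eigenvectorUnitary : Matrix (Fin d) (Fin d) ℂ) *
        Matrix.diagonal (RCLike.ofReal ∘ f ∘ hA.eigenvalues) *
        star (hA.eigenvectorUnitary : Matrix (Fin d) (Fin d) ℂ)) * Nᴴ
      = (N * (hA.eigenvectorUnitary : Matrix (Fin d) (Fin d) ℂ)) *
          Matrix.diagonal (fun k => ((f (hA.eigenvalues k) : ℝ) : ℂ)) *
          (N * (hA.eigenvectorUnitary : Matrix (Fin d) (Fin d) ℂ))ᴴ := by
    rw [Matrix.conjTranspose_mul, Matrix.star_eq_conjTranspose]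
    simp only [Matrix.mul_assoc]
    rfl
  rw [h1, diag_conj_entry]

lemma trace_mul_right {d : ℕ} {A : Matrix (Fin d) (Fin d) ℂ} (hA : A.IsHermitian)
    (M : Matrix (Fin d) (Fin d) ℂ) :
    (A * M).trace = ∑ i, ((hA.eigenvalues i : ℝ) : ℂ) *
      ((star (hA.eigenvectorUnitary : Matrix (Fin d) (Fin d) ℂ) * M *
        (hA.eigenvectorUnitary : Matrix (Fin d) (Fin d) ℂ)) i i) := by
  conv_lhs => rw [hA.spectral_theorem, Unitary.conjStarAlgAut_apply]
  rw [Matrix.trace_mul_cycle, Matrix.trace_mul_cycle, ← Matrix.mul_assoc,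
    Matrix.trace_mul_comm]
  simp [Matrix.trace, Matrix.diag, Matrix.diagonal_mul, Matrix.mul_assoc]

lemma trace_cfc' {d : ℕ} {A : Matrix (Fin d) (Fin d) ℂ} (hA : A.IsHermitian) (f : ℝ → ℝ) :
    (cfc f A).trace = ((∑ i, f (hA.eigenvalues i) : ℝ) : ℂ) := by
  rw [hA.cfc_eq f, Matrix.IsHermitian.cfc, Unitary.conjStarAlgAut_apply, Matrix.trace_mul_cycle,
    Unitary.star_mul_self_of_mem (SetLike.coe_mem _), one_mul, Matrix.trace_diagonal]
  push_cast
  rfl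

lemma trace_mul_cfc_self {d : ℕ} {A : Matrix (Fin d) (Fin d) ℂ} (hA : A.IsHermitian) (f : ℝ → ℝ) :
    (A * cfc f A).trace
      = ((∑ i, hA.eigenvalues i * f (hA.eigenvalues i) : ℝ) : ℂ) := by
  rw [trace_mul_right hA]
  have hUU : (hA.eigenvectorUnitary : Matrix (Fin d) (Fin d) ℂ)ᴴ *
      (hA.eigenvectorUnitary : Matrix (Fin d) (Fin d) ℂ) = 1 := by
    rw [← Matrix.star_eq_conjTranspose]
    exact Unitary.star_mul_self_of_mem (SetLike.coe_mem _)
  have key : ∀ i, (star (hA.eigenvectorUnitary : Matrix (Fin d) (Fin d) ℂ) * cfc f A *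
      (hA.eigenvectorUnitary : Matrix (Fin d) (Fin d) ℂ)) i i
        = ((f (hA.eigenvalues i) : ℝ) : ℂ) := by
    intro i
    have h := conj_cfc_entry hA f (star (hA.eigenvectorUnitary : Matrix (Fin d) (Fin d) ℂ)) i
    have e : (star (hA.eigenvectorUnitary : Matrix (Fin d) (Fin d) ℂ))ᴴ
        = (hA.eigenvectorUnitary : Matrix (Fin d) (Fin d) ℂ) := by
      rw [Matrix.star_eq_conjTranspose, Matrix.conjTranspose_conjTranspose]
    rw [e, Matrix.star_eq_conjTranspose
      (hA.eigenvectorUnitary : Matrix (Fin d) (Fin d) ℂ), hUU] at h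
    rw [Matrix.star_eq_conjTranspose (hA.eigenvectorUnitary : Matrix (Fin d) (Fin d) ℂ), h]
    norm_cast
    simp [Matrix.one_apply, apply_ite Complex.normSq]
  trans (∑ i, ((hA.eigenvalues i * f (hA.eigenvalues i) : ℝ) : ℂ))
  · exact Finset.sum_congr rfl fun i _ => by rw [key i]; push_cast; ring
  · push_cast
    rfl

lemma tangent_line {μ s β : ℝ} (hμ : 0 < μ) (hs : 0 < s) (hβ1 : -1 ≤ β) (hβ0 : β < 0) :
    (1 - β) * s ^ β + β * s ^ (β - 1) * μ ≤ μ ^ β := by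
  set y := μ / s with hy
  have hy0 : 0 < y := div_pos hμ hs
  have hμi : μ = s * y := by rw [hy]; field_simp
  have hb0 : (0:ℝ) ≤ -β := by linarith
  have hb1 : -β ≤ 1 := by linarith
  have h1 : y ^ (-β) ≤ 1 + (-β) * (y - 1) := by
    have h := rpow_one_add_le_one_add_mul_self (s := y - 1) (by linarith) hb0 hb1
    have h' : 1 + (y - 1) = y := by ring
    rwa [h'] at h
  have hyp : 0 < y ^ (-β) := Real.rpow_pos_of_pos hy0 _
  have hpos : 0 < 1 + (-β) * (y - 1) := lt_of_lt_of_le hyp h1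
  have h2 : 1 - (-β) * (y - 1) ≤ y ^ β := by
    have hyb : y ^ β = (y ^ (-β))⁻¹ := by rw [← Real.rpow_neg hy0.le, neg_neg]
    rw [hyb]
    set u := (-β) * (y - 1) with hu
    have hi1 : (1 + u)⁻¹ ≤ (y ^ (-β))⁻¹ := by gcongr
    refine le_trans ?_ hi1
    have hmul : (1 - u) * (1 + u) ≤ 1 := by nlinarith [sq_nonneg u]
    calc 1 - u = (1 - u) * (1 + u) / (1 + u) := by field_simp
      _ ≤ 1 / (1 + u) := by gcongr
      _ = (1 + u)⁻¹ := one_div _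
  have hmain : (1 - β) + β * y ≤ y ^ β := by nlinarith [h2]
  have hsb : 0 < s ^ β := Real.rpow_pos_of_pos hs _
  calc (1 - β) * s ^ β + β * s ^ (β - 1) * μ
      = s ^ β * ((1 - β) + β * y) := by
        rw [hμi, Real.rpow_sub hs, Real.rpow_one]
        field_simp
    _ ≤ s ^ β * y ^ β := mul_le_mul_of_nonneg_left hmain hsb.le
    _ = (s * y) ^ β := (Real.mul_rpow hs.le hy0.le).symm
    _ = μ ^ β := by rw [← hμi]

end helpers

/-- Reverse Hölder duality: for `α ∈ [1/2, 1)` and positive definite `Z`, the infimum of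
`Tr{Z τ^{(α-1)/α}}` over density matrices `τ > 0` equals `‖Z‖_α = (Tr{Z^α})^{1/α}`, and is
attained at `τ = Z^α / Tr{Z^α}`. -/
theorem reverse_holder_duality (d : ℕ) (Z : Matrix (Fin d) (Fin d) ℂ) (hZ : Z.PosDef)
    (α : ℝ) (hα1 : 1/2 ≤ α) (hα2 : α < 1) :
    (∀ τ : Matrix (Fin d) (Fin d) ℂ, τ.PosDef → τ.trace = 1 →
        ((mrpow Z α).trace.re) ^ (1/α) ≤ (Z * mrpow τ ((α - 1) / α)).trace.re) ∧
      (Z * mrpow ((mrpow Z α).trace⁻¹ • mrpow Z α) ((α - 1) / α)).trace.re =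
        ((mrpow Z α).trace.re) ^ (1/α) := by
  have hα0 : (0:ℝ) < α := by linarith
  set β : ℝ := (α - 1) / α with hβdef
  have hβneg : β < 0 := div_neg_of_neg_of_pos (by linarith) hα0
  have hβm1 : (-1:ℝ) ≤ β := by
    rw [hβdef, le_div_iff₀ hα0]
    linarith
  have h1β : 1 - β = 1/α := by
    rw [hβdef]; field_simp; ring
  have hαβ : 1 + α * β = α := by
    rw [hβdef]; field_simp; ring
  rcases Nat.eq_zero_or_pos d with hd | hd
  · subst hd
    have htr0 : ∀ M : Matrix (Fin 0) (Fin 0) ℂ, M.trace = 0 := fun M => by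
      simp [Matrix.trace]
    constructor
    · intro τ _ hτ1
      rw [htr0 τ] at hτ1
      exact absurd hτ1 (by norm_num)
    · rw [htr0, htr0, Complex.zero_re, Real.zero_rpow (one_div_ne_zero hα0.ne')]
  haveI : Nonempty (Fin d) := Fin.pos_iff_nonempty.mp hd
  have hH : Z.IsHermitian := hZ.1
  have hSA : IsSelfAdjoint Z := hH
  set x : Fin d → ℝ := hH.eigenvalues with hxdef
  have hx : ∀ i, 0 < x i := fun i => hZ.eigenvalues_pos i
  set c : ℝ := ∑ i, x i ^ α with hcdef
  have hc : 0 < c :=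
    Finset.sum_pos (fun i _ => Real.rpow_pos_of_pos (hx i) _) Finset.univ_nonempty
  have htrZα : (mrpow Z α).trace = (c : ℂ) := by
    rw [mrpow, trace_cfc' hH]
  have hre : (mrpow Z α).trace.re = c := by rw [htrZα]; exact Complex.ofReal_re c
  have hspec : spectrum ℝ Z = Set.range x := hH.spectrum_real_eq_range_eigenvalues
  set s : Fin d → ℝ := fun i => c⁻¹ * x i ^ α with hsdef
  have hs : ∀ i, 0 < s i := fun i =>
    mul_pos (inv_pos.mpr hc) (Real.rpow_pos_of_pos (hx i) _)
  -- key scalar computations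
  have hA1 : ∀ i, x i * (s i) ^ β = x i ^ α / c ^ β := by
    intro i
    have e1 : (s i) ^ β = x i ^ (α*β) / c ^ β := by
      rw [hsdef]
      simp only []
      rw [show c⁻¹ * x i ^ α = x i ^ α / c by ring,
        Real.div_rpow (Real.rpow_nonneg (hx i).le α) hc.le, ← Real.rpow_mul (hx i).le]
    have e2 : x i * x i ^ (α*β) = x i ^ α := by
      have h := (Real.rpow_add (hx i) 1 (α*β)).symm
      rw [Real.rpow_one] at h
      rw [h, hαβ]
    rw [e1, ← mul_div_assoc, e2]
  have hA2 : ∀ i, x i * (s i) ^ (β - 1) = c ^ (1 - β) := by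
    intro i
    have e1 : (s i) ^ (β - 1) = x i ^ (α*(β-1)) / c ^ (β-1) := by
      rw [hsdef]
      simp only []
      rw [show c⁻¹ * x i ^ α = x i ^ α / c by ring,
        Real.div_rpow (Real.rpow_nonneg (hx i).le α) hc.le, ← Real.rpow_mul (hx i).le]
    have e2 : x i * x i ^ (α*(β-1)) = 1 := by
      have h := (Real.rpow_add (hx i) 1 (α*(β-1))).symm
      rw [Real.rpow_one] at h
      rw [h, show 1 + α*(β-1) = 1 + α*β - α by ring, hαβ, sub_self, Real.rpow_zero]
    rw [e1, ← mul_div_assoc, e2, show (1:ℝ) - β = -(β-1) by ring, Real.rpow_neg hc.le, one_div]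
  have hcc : c / c ^ β = c ^ (1 - β) := by
    rw [Real.rpow_sub hc, Real.rpow_one]
  constructor
  · -- inequality part
    intro τ hτ hτ1
    have hT : τ.IsHermitian := hτ.1
    have hTS : IsSelfAdjoint τ := hT
    set μ : Fin d → ℝ := hT.eigenvalues with hμdef
    have hμ : ∀ k, 0 < μ k := fun k => hτ.eigenvalues_pos k
    set U : Matrix (Fin d) (Fin d) ℂ := (hH.eigenvectorUnitary : Matrix (Fin d) (Fin d) ℂ)
      with hUdef
    set V : Matrix (Fin d) (Fin d) ℂ := (hT.eigenvectorUnitary : Matrix (Fin d) (Fin d) ℂ)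
      with hVdef
    set P : Matrix (Fin d) (Fin d) ℂ := star U * V with hPdef
    set r : Fin d → Fin d → ℝ := fun i k => Complex.normSq (P i k) with hrdef
    have hr : ∀ i k, 0 ≤ r i k := fun i k => Complex.normSq_nonneg _
    have hUstar : U * star U = 1 := Unitary.mul_star_self_of_mem (SetLike.coe_mem _)
    have hVstar : V * star V = 1 := Unitary.mul_star_self_of_mem (SetLike.coe_mem _)
    -- rows of P are unit vectors
    have hPP : P * star P = 1 := by
      rw [hPdef, Matrix.star_mul, star_star, show star U * V * (star V * U)
        = star U * (V * star V) * U by noncomm_ring, hVstar, mul_one]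
      exact Unitary.star_mul_self_of_mem (SetLike.coe_mem _)
    have hrow : ∀ i, ∑ k, r i k = 1 := by
      intro i
      have h1 : (P * star P) i i = ((∑ k, r i k : ℝ) : ℂ) := by
        push_cast
        rw [Matrix.mul_apply]
        refine Finset.sum_congr rfl fun k _ => ?_
        rw [Matrix.star_eq_conjTranspose, Matrix.conjTranspose_apply, hrdef]
        rw [Complex.star_def, Complex.mul_conj]
      rw [hPP, Matrix.one_apply_eq] at h1
      exact_mod_cast h1.symm
    -- diagonal entries of conjugated cfc
    have hq : ∀ (f : ℝ → ℝ) (i : Fin d), (star U * cfc f τ * U) i i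
        = ((∑ k, f (μ k) * r i k : ℝ) : ℂ) := by
      intro f i
      have h := conj_cfc_entry hT f (star U) i
      have e : (star U)ᴴ = U := by
        rw [Matrix.star_eq_conjTranspose, Matrix.conjTranspose_conjTranspose]
      rw [e] at h
      exact h
    -- trace of τ in these coordinates
    have hptrace : ∑ i, (∑ k, μ k * r i k) = 1 := by
      have hid : cfc (fun t : ℝ => t) τ = τ := cfc_id' ℝ τ
      have h2 : (star U * τ * U).trace = 1 := by
        rw [Matrix.trace_mul_cycle, hUstar, one_mul, hτ1]
      have h3 : (star U * τ * U).trace = ((∑ i, ∑ k, μ k * r i k : ℝ) : ℂ) := by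
        rw [Matrix.trace]
        push_cast
        refine Finset.sum_congr rfl fun i _ => ?_
        rw [Matrix.diag_apply, ← hid, hq (fun t => t) i]
        push_cast
        rfl
      rw [h3] at h2
      exact_mod_cast h2
    -- the trace we want to bound
    have htrace : (Z * mrpow τ β).trace
        = ((∑ i, x i * (∑ k, (μ k) ^ β * r i k) : ℝ) : ℂ) := by
      rw [mrpow, trace_mul_right hH]
      push_cast
      refine Finset.sum_congr rfl fun i _ => ?_
      rw [← hUdef, hq (fun t => t ^ β) i]
      push_cast
      rfl
    rw [hre, htrace, Complex.ofReal_re]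
    -- pointwise tangent line bound
    have hineq : ∀ i, (1 - β) * (s i) ^ β + β * (s i) ^ (β - 1) * (∑ k, μ k * r i k)
        ≤ ∑ k, (μ k) ^ β * r i k := by
      intro i
      have h1 : ∀ k, ((1 - β) * (s i) ^ β + β * (s i) ^ (β - 1) * μ k) * r i k
          ≤ (μ k) ^ β * r i k := fun k =>
        mul_le_mul_of_nonneg_right (tangent_line (hμ k) (hs i) hβm1 hβneg) (hr i k)
      have h2 : ∑ k, ((1 - β) * (s i) ^ β + β * (s i) ^ (β - 1) * μ k) * r i k
          = (1 - β) * (s i) ^ β * (∑ k, r i k) + β * (s i) ^ (β - 1) * (∑ k, μ k * r i k) := by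
        rw [Finset.mul_sum, Finset.mul_sum, ← Finset.sum_add_distrib]
        exact Finset.sum_congr rfl fun k _ => by ring
      calc (1 - β) * (s i) ^ β + β * (s i) ^ (β - 1) * (∑ k, μ k * r i k)
          = (1 - β) * (s i) ^ β * (∑ k, r i k)
              + β * (s i) ^ (β - 1) * (∑ k, μ k * r i k) := by rw [hrow i]; ring
        _ = ∑ k, ((1 - β) * (s i) ^ β + β * (s i) ^ (β - 1) * μ k) * r i k := h2.symm
        _ ≤ ∑ k, (μ k) ^ β * r i k := Finset.sum_le_sum fun k _ => h1 k
    have hstep : ∑ i, x i * ((1 - β) * (s i) ^ β + β * (s i) ^ (β - 1) * (∑ k, μ k * r i k))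
        = c ^ (1 - β) := by
      calc ∑ i, x i * ((1 - β) * (s i) ^ β + β * (s i) ^ (β - 1) * (∑ k, μ k * r i k))
          = ∑ i, ((1 - β) * (x i * (s i) ^ β)
              + β * (x i * (s i) ^ (β - 1)) * (∑ k, μ k * r i k)) := by
            exact Finset.sum_congr rfl fun i _ => by ring
        _ = ∑ i, ((1 - β) * (x i ^ α / c ^ β)
              + β * c ^ (1 - β) * (∑ k, μ k * r i k)) := by
            exact Finset.sum_congr rfl fun i _ => by rw [hA1 i, hA2 i]
        _ = (1 - β) * ((∑ i, x i ^ α) / c ^ β)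
              + β * c ^ (1 - β) * (∑ i, ∑ k, μ k * r i k) := by
            rw [Finset.sum_add_distrib, ← Finset.mul_sum, ← Finset.mul_sum, Finset.sum_div,
              Finset.mul_sum]
        _ = c ^ (1 - β) := by
            rw [hptrace, ← hcdef, hcc]; ring
    calc c ^ (1/α) = c ^ (1 - β) := by rw [h1β]
      _ = ∑ i, x i * ((1 - β) * (s i) ^ β + β * (s i) ^ (β - 1) * (∑ k, μ k * r i k)) :=
          hstep.symm
      _ ≤ ∑ i, x i * (∑ k, (μ k) ^ β * r i k) :=
          Finset.sum_le_sum fun i _ => mul_le_mul_of_nonneg_left (hineq i) (hx i).le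
  · -- equality part
    have hconth : ContinuousOn (fun t : ℝ => c⁻¹ * t ^ α) (spectrum ℝ Z) := fun t _ =>
      (continuousAt_const.mul (Real.continuousAt_rpow_const t α (Or.inr hα0.le))).continuousWithinAt
    have hcontα : ContinuousOn (fun t : ℝ => t ^ α) (spectrum ℝ Z) := fun t _ =>
      (Real.continuousAt_rpow_const t α (Or.inr hα0.le)).continuousWithinAt
    have hcontg : ContinuousOn (fun t : ℝ => t ^ β)
        ((fun t : ℝ => c⁻¹ * t ^ α) '' spectrum ℝ Z) := by
      rintro y ⟨t, ht, rfl⟩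
      have ht0 : 0 < t := by
        rw [hspec] at ht; obtain ⟨i, rfl⟩ := ht; exact hx i
      have hy0 : 0 < c⁻¹ * t ^ α := mul_pos (inv_pos.mpr hc) (Real.rpow_pos_of_pos ht0 α)
      exact (Real.continuousAt_rpow_const _ _ (Or.inl hy0.ne')).continuousWithinAt
    have hsmul : (mrpow Z α).trace⁻¹ • mrpow Z α = cfc (fun t : ℝ => c⁻¹ * t ^ α) Z := by
      rw [htrZα, cfc_const_mul c⁻¹ (fun t : ℝ => t ^ α) Z hcontα, mrpow]
      ext i j
      simp [Matrix.smul_apply, Complex.real_smul, Complex.ofReal_inv]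
    have hcomp : mrpow (cfc (fun t : ℝ => c⁻¹ * t ^ α) Z) β
        = cfc (fun t : ℝ => (c⁻¹ * t ^ α) ^ β) Z := by
      rw [mrpow]
      exact (cfc_comp' (fun y : ℝ => y ^ β) (fun t : ℝ => c⁻¹ * t ^ α) Z hcontg hconth).symm
    rw [hsmul, hcomp, trace_mul_cfc_self hH (fun t : ℝ => (c⁻¹ * t ^ α) ^ β),
      Complex.ofReal_re, hre]
    have : ∑ i, x i * (c⁻¹ * x i ^ α) ^ β = c ^ (1/α) := by
      have h1 : ∀ i, x i * (c⁻¹ * x i ^ α) ^ β = x i ^ α / c ^ β := fun i => hA1 i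
      rw [Finset.sum_congr rfl fun i _ => h1 i, ← Finset.sum_div, ← hcdef, hcc, h1β]
    exact this
end
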